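/- Let d = ℝA ⋉_{D'} k be the semidirect product of ℝ with a Kähler flat Lie algebra (k, J', ⟨·,·⟩'), where D' is a skew-symmetric derivation of k commuting with J'. Define φ ∈ End(d) by φ(aA + x) = J'x, η(aA + x) = a, ξ = A, and extend the metric so A ⊥ k, |A| = 1. Then (⟨·,·⟩, φ, ξ, η) is an almost contact metric structure on d with dη = 0, dΦ = 0 (Φ(x,y) = ⟨φx, y⟩), and N_φ = 0; i.e., it is a coKähler structure. -/

import Mathlib

/-- The bracket of the semidirect product `d = ℝA ⋉_{D'} k`, written on
`ℝ × k`: `[(a,x),(b,y)] = (0, a D'y - b D'x + [x,y]_k)`. -/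
def sdBracket {k : Type*} [LieRing k] [LieAlgebra ℝ k] (D' : k →ₗ[ℝ] k) :
    (ℝ × k) → (ℝ × k) → (ℝ × k) :=
  fun u v => (0, u.1 • D' v.2 - v.1 • D' u.2 + ⁅u.2, v.2⁆)

/-- The endomorphism `φ(aA + x) = J'x` on `d = ℝA ⋉ k`. -/
def sdPhi {k : Type*} [LieRing k] [LieAlgebra ℝ k] (J' : k →ₗ[ℝ] k) :
    (ℝ × k) → (ℝ × k) :=
  fun u => (0, J' u.2)

/-- The product metric on `d = ℝA ⋉ k` with `A ⊥ k`, `|A| = 1`. -/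
def sdMetric {k : Type*} [LieRing k] [LieAlgebra ℝ k]
    (B' : k →ₗ[ℝ] k →ₗ[ℝ] ℝ) : (ℝ × k) → (ℝ × k) → ℝ :=
  fun u v => u.1 * v.1 + B' u.2 v.2

/-- Let `d = ℝA ⋉_{D'} k` be the semidirect product of `ℝ` with a
Kähler flat Lie algebra `(k, J', ⟨·,·⟩')` by a skew-symmetric derivation `D'`
commuting with `J'`. With `φ(aA+x) = J'x`, `η(aA+x) = a`, `ξ = A`, the tuple
`(⟨·,·⟩, φ, ξ, η)` is an almost contact metric structure with `dη = 0`,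
`dΦ = 0` and `N_φ = 0`; i.e. it is a coKähler structure. -/
theorem semidirect_coKahler {k : Type*} [LieRing k] [LieAlgebra ℝ k]
    (B' : k →ₗ[ℝ] k →ₗ[ℝ] ℝ)
    (hsymm : ∀ x y : k, B' x y = B' y x)
    (hpos : ∀ x : k, x ≠ 0 → 0 < B' x x)
    (J' : k →ₗ[ℝ] k)
    (hJ2 : ∀ x : k, J' (J' x) = -x)
    (hcompat : ∀ x y : k, B' (J' x) (J' y) = B' x y)
    (hNJ' : ∀ x y : k, ⁅J' x, J' y⁆ - ⁅x, y⁆ - J' (⁅J' x, y⁆ + ⁅x, J' y⁆) = 0)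
    (hdω' : ∀ x y w : k,
      B' (J' ⁅x, y⁆) w + B' (J' ⁅y, w⁆) x + B' (J' ⁅w, x⁆) y = 0)
    (D' : k →ₗ[ℝ] k)
    (hder : ∀ x y : k, D' ⁅x, y⁆ = ⁅D' x, y⁆ + ⁅x, D' y⁆)
    (hDskew : ∀ x y : k, B' (D' x) y = - B' x (D' y))
    (hDJ : ∀ x : k, D' (J' x) = J' (D' x)) :
    -- η(ξ) = 1
    ((1 : ℝ), (0 : k)).1 = 1 ∧
    -- φ² = -Id + η ⊗ ξ
    (∀ u : ℝ × k, sdPhi J' (sdPhi J' u) = -u + u.1 • ((1 : ℝ), (0 : k))) ∧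
    -- ⟨φu, φv⟩ = ⟨u,v⟩ - η(u)η(v)
    (∀ u v : ℝ × k,
      sdMetric B' (sdPhi J' u) (sdPhi J' v) = sdMetric B' u v - u.1 * v.1) ∧
    -- dη = 0
    (∀ u v : ℝ × k, (sdBracket D' u v).1 = 0) ∧
    -- dΦ = 0, where Φ(u,v) = ⟨φu, v⟩
    (∀ u v s : ℝ × k,
      sdMetric B' (sdPhi J' (sdBracket D' u v)) s
        + sdMetric B' (sdPhi J' (sdBracket D' v s)) u
        + sdMetric B' (sdPhi J' (sdBracket D' s u)) v = 0) ∧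
    -- N_φ = 0
    (∀ u v : ℝ × k,
      sdBracket D' (sdPhi J' u) (sdPhi J' v)
        + sdPhi J' (sdPhi J' (sdBracket D' u v))
        - sdPhi J' (sdBracket D' (sdPhi J' u) v + sdBracket D' u (sdPhi J' v))
        = 0) := by
  have key : ∀ y w : k, B' (J' (D' y)) w = B' (J' (D' w)) y := by
    intro y w
    have h1 := hcompat (J' y) (D' w)
    rw [hJ2 y] at h1
    -- h1 : B' (-y) (J' (D' w)) = B' (J' y) (D' w)
    have h1' : B' y (J' (D' w)) = - B' (J' y) (D' w) := by
      rw [map_neg] at h1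
      simp only [LinearMap.neg_apply] at h1
      linarith
    calc B' (J' (D' y)) w = B' (D' (J' y)) w := by rw [hDJ]
      _ = - B' (J' y) (D' w) := hDskew _ _
      _ = B' y (J' (D' w)) := by linarith
      _ = B' (J' (D' w)) y := hsymm _ _
  refine ⟨rfl, ?_, ?_, fun u v => rfl, ?_, ?_⟩
  · rintro ⟨a, x⟩
    simp only [sdPhi, hJ2, Prod.mk.injEq, Prod.neg_mk, Prod.smul_mk, smul_eq_mul,
      smul_zero, Prod.mk_add_mk, add_zero]
    constructor
    · ring
    · trivial
  · rintro ⟨a, x⟩ ⟨b, y⟩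
    simp only [sdPhi, sdMetric, hcompat]
    ring
  · rintro ⟨a, x⟩ ⟨b, y⟩ ⟨c, w⟩
    simp only [sdBracket, sdPhi, sdMetric, map_add, map_sub, map_smul,
      LinearMap.add_apply, LinearMap.sub_apply, LinearMap.smul_apply, smul_eq_mul]
    linear_combination hdω' x y w + a * key y w + b * key w x + c * key x y
  · rintro ⟨a, x⟩ ⟨b, y⟩
    have h := hNJ' x y
    simp only [sdBracket, sdPhi, Prod.mk.injEq, Prod.mk_add_mk, Prod.mk_sub_mk,
      map_add, map_sub, map_smul, map_zero, hDJ, hJ2, zero_smul, smul_neg] at h ⊢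
    refine Prod.ext (by norm_num) ?_
    simp only [Prod.snd_zero]
    linear_combination (norm := module) h
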